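/- arXiv:2305.16089 — 2 statements merged into one kernel-verified Lean document; each statement's English description precedes it below -/
import Mathlib

section
/- For all integers n ≥ 2 and p ≥ q ≥ 1 with p + q = n, if 2pq ≤ ⌊(n−1)²/2⌋ + ⌊(n−1)/2⌋ (so that q_{n,n−1}(2pq) is finite), then q_{n,n}(2pq) < q_{n,n−1}(2pq) + (n − 1), where q_{n,n−1} denotes the function q_{m+1,m} with m = n − 1. -/
private lemma half_bounds (a : ℤ) : 2 * (a / 2) ≤ a ∧ a ≤ 2 * (a / 2) + 1 := by omega

private lemma interval_uniq {n h p p' : ℤ}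
    (h1 : n - p ≤ p) (h3 : 2 * (p + 1) * (n - p - 1) < h) (h4 : h ≤ 2 * p * (n - p))
    (h1' : n - p' ≤ p') (h3' : 2 * (p' + 1) * (n - p' - 1) < h) (h4' : h ≤ 2 * p' * (n - p')) :
    p = p' := by
  rcases lt_trichotomy p p' with hlt | heq | hlt
  · exfalso
    nlinarith [mul_nonneg (by linarith : (0:ℤ) ≤ p' - p - 1)
      (by linarith : (0:ℤ) ≤ p' + p - n + 1)]
  · exact heq
  · exfalso
    nlinarith [mul_nonneg (by linarith : (0:ℤ) ≤ p - p' - 1)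
      (by linarith : (0:ℤ) ≤ p + p' - n + 1)]

private lemma qnn_exists (n h : ℤ) (hn : 2 ≤ n) (h0 : 0 < h) (hh : h ≤ n ^ 2 / 2) :
    ∃ p : ℤ, n - p ≤ p ∧ 1 ≤ n - p ∧ 2 * (p + 1) * (n - p - 1) < h ∧ h ≤ 2 * p * (n - p) := by
  set c := (n + 1) / 2 with hc
  have hc2 : 2 * c = n ∨ 2 * c = n + 1 := by omega
  have hcb : h ≤ 2 * c * (n - c) := by
    have h1 : n ^ 2 - 1 ≤ 2 * (2 * c * (n - c)) := by
      rcases hc2 with hc2 | hc2 <;> nlinarith [hc2]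
    have h2 : 2 * (n ^ 2 / 2) ≤ n ^ 2 := (half_bounds _).1
    have h3 : 2 * h ≤ 2 * (2 * c * (n - c)) + 1 := by linarith
    obtain ⟨T, hT⟩ : ∃ T, 2 * c * (n - c) = T := ⟨_, rfl⟩
    rw [hT] at h3 ⊢
    omega
  have hbdd : ∃ b : ℤ, ∀ z : ℤ, (h ≤ 2 * z * (n - z) ∧ z ≤ n - 1) → z ≤ b :=
    ⟨n - 1, fun z hz => hz.2⟩
  have hinh : ∃ z : ℤ, h ≤ 2 * z * (n - z) ∧ z ≤ n - 1 := ⟨c, hcb, by omega⟩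
  obtain ⟨g, ⟨hg1, hg2⟩, hgr⟩ := Int.exists_greatest_of_bdd hbdd hinh
  have hcg : c ≤ g := hgr c ⟨hcb, by omega⟩
  refine ⟨g, by omega, by omega, ?_, hg1⟩
  rcases eq_or_lt_of_le hg2 with hgeq | hglt
  · have hz : 2 * (g + 1) * (n - g - 1) = 0 := by rw [hgeq]; ring
    linarith
  · by_contra hcon
    push_neg at hcon
    have := hgr (g + 1) ⟨by linarith, by omega⟩
    omega

open Classical in
/-- The quantum lower bound function `q_{n,n}` for the Khovanov homology of `T(n,n)`:
`+∞` outside `[0, ⌊n²/2⌋]`, `n² - 2n` at `h = 0`, and `n² + 2⌈h/2⌉ - 2p` for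
`2(p+1)(q-1) < h ≤ 2pq` where `p ≥ q ≥ 1`, `p + q = n` (with `q = n - p`). -/
noncomputable def qnn (n h : ℤ) : WithTop ℤ :=
  if h < 0 ∨ n ^ 2 / 2 < h then ⊤
  else if h = 0 then ((n ^ 2 - 2 * n : ℤ) : WithTop ℤ)
  else if hc : ∃ p : ℤ, n - p ≤ p ∧ 1 ≤ n - p ∧
      2 * (p + 1) * (n - p - 1) < h ∧ h ≤ 2 * p * (n - p)
    then ((n ^ 2 + 2 * ((h + 1) / 2) - 2 * hc.choose : ℤ) : WithTop ℤ)
  else ⊤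

open Classical in
/-- The quantum lower bound function `q_{n+1,n}` for the Khovanov homology of `T(n+1,n)`:
`+∞` outside `[0, ⌊n²/2⌋ + ⌊n/2⌋]`; `q_{n,n}(h) + n - 3` at `h = 2pq + 1 ≤ ⌊n²/2⌋`
(`p ≥ q ≥ 1`, `p + q = n`); `q_{n,n}(h) + n - 1` at other `h` with `0 ≤ h ≤ ⌊n²/2⌋`;
and `⌊n²/2⌋ + 2h - 1` for `⌊n²/2⌋ ≤ h ≤ ⌊n²/2⌋ + ⌊n/2⌋`. -/
noncomputable def qn1n (n h : ℤ) : WithTop ℤ :=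
  if h < 0 ∨ n ^ 2 / 2 + n / 2 < h then ⊤
  else if ∃ p : ℤ, n - p ≤ p ∧ 1 ≤ n - p ∧ h = 2 * p * (n - p) + 1 ∧ h ≤ n ^ 2 / 2
    then qnn n h + ((n - 3 : ℤ) : WithTop ℤ)
  else if h ≤ n ^ 2 / 2 then qnn n h + ((n - 1 : ℤ) : WithTop ℤ)
  else ((n ^ 2 / 2 + 2 * h - 1 : ℤ) : WithTop ℤ)

private lemma qnn_eval (n h p : ℤ) (h1 : n - p ≤ p) (h2 : 1 ≤ n - p)
    (h3 : 2 * (p + 1) * (n - p - 1) < h) (h4 : h ≤ 2 * p * (n - p)) :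
    qnn n h = ((n ^ 2 + 2 * ((h + 1) / 2) - 2 * p : ℤ) : WithTop ℤ) := by
  have hex : ∃ p' : ℤ, n - p' ≤ p' ∧ 1 ≤ n - p' ∧ 2 * (p' + 1) * (n - p' - 1) < h ∧
      h ≤ 2 * p' * (n - p') := ⟨p, h1, h2, h3, h4⟩
  have h0 : 0 < h := by
    nlinarith [mul_nonneg (by linarith : (0:ℤ) ≤ p + 1) (by linarith : (0:ℤ) ≤ n - p - 1)]
  have hle : h ≤ n ^ 2 / 2 := by
    have k : 4 * (p * (n - p)) ≤ n ^ 2 := by nlinarith [sq_nonneg (n - 2 * p)]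
    have k2 : h ≤ 2 * (p * (n - p)) := by linarith
    obtain ⟨A, hA⟩ : ∃ A, p * (n - p) = A := ⟨_, rfl⟩
    obtain ⟨B, hB⟩ : ∃ B, n ^ 2 = B := ⟨_, rfl⟩
    rw [hA] at k k2
    rw [hB] at k ⊢
    omega
  rw [qnn, if_neg (by push_neg; exact ⟨h0.le, hle⟩), if_neg (by omega : ¬ h = 0), dif_pos hex]
  have spec := hex.choose_spec
  have heq : hex.choose = p :=
    interval_uniq spec.1 spec.2.2.1 spec.2.2.2 h1 h3 h4
  rw [heq]

/-- Addendum to Lemma 5.3: inequality (d) is strict at `h = 2pq` for `p ≥ q ≥ 1`,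
`p + q = n ≥ 2`, provided `2pq ≤ ⌊(n-1)²/2⌋ + ⌊(n-1)/2⌋`. -/
theorem qnn_lt_qn1n_add_at_2pq (n p q : ℤ) (hn : 2 ≤ n) (hpq : q ≤ p) (hq : 1 ≤ q)
    (hsum : p + q = n) (hmax : 2 * p * q ≤ (n - 1) ^ 2 / 2 + (n - 1) / 2) :
    qnn n (2 * p * q) < qn1n (n - 1) (2 * p * q) + ((n - 1 : ℤ) : WithTop ℤ) := by
  subst hsum
  have hp : (0:ℤ) < p := by linarith
  have h0 : 0 < 2 * p * q := by
    have := mul_pos hp (by linarith : (0:ℤ) < q); linarith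
  have hn3 : 3 ≤ p + q := by
    by_contra hcon
    have hp1 : p = 1 := by omega
    have hq1 : q = 1 := by omega
    rw [hp1, hq1] at hmax
    norm_num at hmax
  have e1 : qnn (p + q) (2 * p * q) =
      (((p + q) ^ 2 + 2 * ((2 * p * q + 1) / 2) - 2 * p : ℤ) : WithTop ℤ) :=
    qnn_eval _ _ p (by omega) (by omega) (by nlinarith) (le_of_eq (by ring))
  have hhalf : 2 * ((2 * p * q + 1) / 2) = 2 * (p * q) := by
    obtain ⟨a, ha⟩ : ∃ a, p * q = a := ⟨_, rfl⟩
    rw [mul_assoc, ha]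
    omega
  rw [qn1n, if_neg (by push_neg; exact ⟨h0.le, hmax⟩)]
  have hnot : ¬ ∃ p' : ℤ, p + q - 1 - p' ≤ p' ∧ 1 ≤ p + q - 1 - p' ∧
      2 * p * q = 2 * p' * (p + q - 1 - p') + 1 ∧ 2 * p * q ≤ (p + q - 1) ^ 2 / 2 := by
    rintro ⟨p', -, -, c3, -⟩
    have c3' : 2 * (p * q) = 2 * (p' * (p + q - 1 - p')) + 1 := by linarith
    obtain ⟨a, ha⟩ : ∃ a, p * q = a := ⟨_, rfl⟩
    obtain ⟨b, hb⟩ : ∃ b, p' * (p + q - 1 - p') = b := ⟨_, rfl⟩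
    rw [ha, hb] at c3'
    omega
  rw [if_neg hnot]
  by_cases hA : 2 * p * q ≤ (p + q - 1) ^ 2 / 2
  · rw [if_pos hA]
    obtain ⟨g, hg1, hg2, hg3, hg4⟩ := qnn_exists (p + q - 1) (2 * p * q) (by omega) h0 hA
    have e2 : qnn (p + q - 1) (2 * p * q) =
        (((p + q - 1) ^ 2 + 2 * ((2 * p * q + 1) / 2) - 2 * g : ℤ) : WithTop ℤ) :=
      qnn_eval _ _ g hg1 hg2 hg3 hg4
    have h4pq : 4 * (p * q) ≤ (p + q - 1) ^ 2 := by
      linarith [(half_bounds ((p + q - 1) ^ 2)).1, hA]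
    have hqp : q + 1 ≤ p := by
      by_contra hcon
      push_neg at hcon
      have hpe : p = q := le_antisymm (by omega) hpq
      rw [hpe] at h4pq
      nlinarith [h4pq]
    have hgle : g ≤ p - 2 := by
      by_contra hcon
      push_neg at hcon
      have hkey : 2 * g * (p + q - 1 - g) ≤ 2 * (p - 1) * q := by
        nlinarith [sq_nonneg (g - (p - 1)),
          mul_nonneg (by linarith : (0:ℤ) ≤ g - (p - 1)) (by linarith : (0:ℤ) ≤ p - 1 - q)]
      linarith [hg4, hkey, hq]
    rw [e1, e2, ← WithTop.coe_add, ← WithTop.coe_add, WithTop.coe_lt_coe]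
    nlinarith [hgle]
  · rw [if_neg hA]
    push_neg at hA
    rw [e1, ← WithTop.coe_add, WithTop.coe_lt_coe]
    have ht2 : 2 ≤ p - q := by
      have h4pq : 4 * (p * q) ≤ (p + q - 1) ^ 2 + (p + q - 1) := by
        linarith [(half_bounds ((p + q - 1) ^ 2)).1, (half_bounds (p + q - 1)).1, hmax]
      by_contra hcon
      push_neg at hcon
      have h01 : p - q = 0 ∨ p - q = 1 := by omega
      rcases h01 with h01 | h01 <;> nlinarith [h4pq, hn]
    have hub : (p - q) ^ 2 ≤ 2 * (p + q) - 2 := by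
      have hM : (p + q - 1) ^ 2 ≤ 4 * (p * q) - 1 := by
        linarith [(half_bounds ((p + q - 1) ^ 2)).2, hA]
      nlinarith [hM]
    have hD : (p + q - 1) ^ 2 - 1 ≤ 2 * ((p + q - 1) ^ 2 / 2) :=
      by linarith [(half_bounds ((p + q - 1) ^ 2)).2]
    nlinarith [hD, hub, ht2, hhalf]
end

section
/- For every integer n ≥ 1, the function q_{n,n} is nondecreasing on the nonnegative integers: for all integers h, h' with 0 ≤ h ≤ h', one has q_{n,n}(h) ≤ q_{n,n}(h') in ℤ ∪ {+∞}. -/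
private lemma cond_unique (n h p₁ p₂ : ℤ)
    (h1 : n - p₁ ≤ p₁ ∧ 1 ≤ n - p₁ ∧ 2 * (p₁ + 1) * (n - p₁ - 1) < h ∧ h ≤ 2 * p₁ * (n - p₁))
    (h2 : n - p₂ ≤ p₂ ∧ 1 ≤ n - p₂ ∧ 2 * (p₂ + 1) * (n - p₂ - 1) < h ∧ h ≤ 2 * p₂ * (n - p₂)) :
    p₁ = p₂ := by
  obtain ⟨a1, b1, c1, d1⟩ := h1
  obtain ⟨a2, b2, c2, d2⟩ := h2
  by_contra hne
  rcases lt_or_gt_of_ne hne with hlt | hlt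
  · nlinarith [mul_nonneg (by omega : (0:ℤ) ≤ p₂ - p₁ - 1) (by omega : (0:ℤ) ≤ p₁ + p₂ + 1 - n)]
  · nlinarith [mul_nonneg (by omega : (0:ℤ) ≤ p₁ - p₂ - 1) (by omega : (0:ℤ) ≤ p₁ + p₂ + 1 - n)]

private lemma qnn_eq (n h p : ℤ)
    (hp : n - p ≤ p ∧ 1 ≤ n - p ∧ 2 * (p + 1) * (n - p - 1) < h ∧ h ≤ 2 * p * (n - p))
    (hh : 0 < h) :
    qnn n h = ((n ^ 2 + 2 * ((h + 1) / 2) - 2 * p : ℤ) : WithTop ℤ) := by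
  classical
  have hex : ∃ p : ℤ, n - p ≤ p ∧ 1 ≤ n - p ∧
      2 * (p + 1) * (n - p - 1) < h ∧ h ≤ 2 * p * (n - p) := ⟨p, hp⟩
  have hr : 2 * h ≤ n ^ 2 := by nlinarith [hp.1, hp.2.1, hp.2.2.2, sq_nonneg (2 * p - n)]
  rw [qnn, if_neg (by omega), if_neg (by omega), dif_pos hex,
    cond_unique n h hex.choose p hex.choose_spec hp]

private lemma exists_p (n h p' : ℤ) (hn : 1 ≤ n) (hh : 0 < h)
    (h1 : n ≤ 2 * p') (h2 : h ≤ 2 * p' * (n - p')) :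
    ∃ p : ℤ, n - p ≤ p ∧ 1 ≤ n - p ∧
      2 * (p + 1) * (n - p - 1) < h ∧ h ≤ 2 * p * (n - p) := by
  classical
  obtain ⟨lb, ⟨hlb1, hlb2⟩, hmin⟩ := Int.exists_least_of_bdd
    (P := fun p => n ≤ 2 * p ∧ 2 * p * (n - p) < h)
    ⟨0, fun z hz => by omega⟩ ⟨n, by omega, by nlinarith⟩
  refine ⟨lb - 1, ?_, ?_, ?_, ?_⟩
  · -- n ≤ 2 * (lb - 1)
    by_contra hcon
    have hle : lb ≤ p' := by omega
    nlinarith [mul_nonneg (by omega : (0:ℤ) ≤ p' - lb) (by omega : (0:ℤ) ≤ p' + lb - n)]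
  · -- 1 ≤ n - (lb - 1)
    have hP : n ≤ 2 * (lb - 1) := by
      by_contra hcon
      have hle : lb ≤ p' := by omega
      nlinarith [mul_nonneg (by omega : (0:ℤ) ≤ p' - lb) (by omega : (0:ℤ) ≤ p' + lb - n)]
    have hnot : ¬ (n ≤ 2 * (lb - 1) ∧ 2 * (lb - 1) * (n - (lb - 1)) < h) := by
      intro hS
      have := hmin _ hS
      omega
    have hge : h ≤ 2 * (lb - 1) * (n - (lb - 1)) := by
      by_contra hcon
      exact hnot ⟨hP, by omega⟩
    nlinarith
  · calc 2 * ((lb - 1) + 1) * (n - (lb - 1) - 1) = 2 * lb * (n - lb) := by ring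
    _ < h := hlb2
  · have hP : n ≤ 2 * (lb - 1) := by
      by_contra hcon
      have hle : lb ≤ p' := by omega
      nlinarith [mul_nonneg (by omega : (0:ℤ) ≤ p' - lb) (by omega : (0:ℤ) ≤ p' + lb - n)]
    by_contra hcon
    have := hmin (lb - 1) ⟨hP, by omega⟩
    omega

/-- For `n ≥ 1`, the function `q_(n,n)` is nondecreasing on the nonnegative
integers. -/
theorem qnn_monotone (n : ℤ) (hn : 1 ≤ n) (h h' : ℤ) (h0 : 0 ≤ h) (hle : h ≤ h') :
    qnn n h ≤ qnn n h' := by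
  classical
  by_cases H1 : h' < 0 ∨ n ^ 2 / 2 < h'
  · have : qnn n h' = ⊤ := by rw [qnn, if_pos H1]
    simp [this]
  push_neg at H1
  by_cases h'0 : h' = 0
  · have h0' : h = 0 := by omega
    subst h0' h'0
    exact le_rfl
  by_cases hc' : ∃ p : ℤ, n - p ≤ p ∧ 1 ≤ n - p ∧
      2 * (p + 1) * (n - p - 1) < h' ∧ h' ≤ 2 * p * (n - p)
  · obtain ⟨p', hp'⟩ := hc'
    have hh' : 0 < h' := by omega
    rw [qnn_eq n h' p' hp' hh']
    by_cases hh0 : h = 0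
    · subst hh0
      rw [qnn, if_neg (by omega), if_pos rfl]
      have hq : 1 ≤ n - p' := hp'.2.1
      have hd : 1 ≤ (h' + 1) / 2 := by omega
      exact_mod_cast (by linarith : (n ^ 2 - 2 * n : ℤ) ≤ n ^ 2 + 2 * ((h' + 1) / 2) - 2 * p')
    · have hh : 0 < h := by omega
      obtain ⟨p, hp⟩ := exists_p n h p' hn hh (by linarith [hp'.1]) (by linarith [hp'.2.2.2, hle])
      rw [qnn_eq n h p hp hh]
      by_cases hpp : p = p'
      · subst hpp
        exact_mod_cast (by omega : (n ^ 2 + 2 * ((h + 1) / 2) - 2 * p : ℤ) ≤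
          n ^ 2 + 2 * ((h' + 1) / 2) - 2 * p)
      · have hlt : p' < p := by
          rcases lt_or_gt_of_ne hpp with hl | hl
          · exfalso
            obtain ⟨a1, b1, c1, d1⟩ := hp
            obtain ⟨a2, b2, c2, d2⟩ := hp'
            nlinarith [mul_nonneg (by omega : (0:ℤ) ≤ p' - p - 1)
              (by omega : (0:ℤ) ≤ p + p' + 1 - n)]
          · exact hl
        obtain ⟨a1, b1, c1, d1⟩ := hp
        obtain ⟨a2, b2, c2, d2⟩ := hp'
        have k1 : (h + 1) / 2 ≤ p * (n - p) := by
          have : h ≤ 2 * (p * (n - p)) := by linarith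
          omega
        have k2 : (p' + 1) * (n - p' - 1) + 1 ≤ (h' + 1) / 2 := by
          have : 2 * ((p' + 1) * (n - p' - 1)) < h' := by linarith
          omega
        have key : p * (n - p) - p ≤ (p' + 1) * (n - p' - 1) + 1 - p' := by
          nlinarith [mul_nonneg (by omega : (0:ℤ) ≤ p - p' - 1)
            (by omega : (0:ℤ) ≤ p + p' + 2 - n)]
        exact_mod_cast (by linarith : (n ^ 2 + 2 * ((h + 1) / 2) - 2 * p : ℤ) ≤
          n ^ 2 + 2 * ((h' + 1) / 2) - 2 * p')
  · have : qnn n h' = ⊤ := by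
      rw [qnn, if_neg (by omega), if_neg h'0, dif_neg hc']
    simp [this]
end
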